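/- Let M be an 𝔏-module with IM ≠ 0, where I = 𝔤 ⊗ A, and let M̂ ⊆ Hom(A, M) be the span of the maps μ(x, u) : a ↦ (ax)u for x ∈ I, u ∈ M. Then the formulas l·μ(x,u) = μ([l,x],u) + (−1)^{|l||x|} μ(x, lu) (for homogeneous l ∈ 𝔏) and a·μ(x,u) = μ(ax, u) (for a ∈ A) make M̂ a well-defined A𝔏-module, and π : M̂ → M, μ(x,u) ↦ xu, is a surjective 𝔏-module homomorphism onto IM. -/
import Mathlib


/-!
STATEMENT 13: Let `M` be an `𝔏`-module with `IM ≠ 0` (`I = 𝔤 ⊗ A`), and let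
`M̂ ⊆ Hom(A, M)` be the span of the maps `μ(x, u) : a ↦ (ax)u`.  Then the
formulas `l·μ(x,u) = μ([l,x],u) + μ(x, lu)` and `a·μ(x,u) = μ(ax,u)` make
`M̂` a well-defined `A𝔏`-module, and `π : M̂ → M`, `μ(x,u) ↦ xu` (evaluation
at `t^0 = 1`) is a surjective `𝔏`-module homomorphism onto `IM`.

Model: `Hom(A, M)` is identified with `ℤ → M` (values on the basis `t^r`);
the `𝔏`-module `M` is given by operators `ρd i`, `ρx s j` with the defining
relations; `μ(x_s(j), u)` is the function `r ↦ ρx s (j+r) u`, and `M̂` their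
span.  The actions (which extend the stated formulas on the `μ(x,u)`) are
`(d_i·h)(r) = d_i(h(t^r)) − h(d_i t^r) = ρd i (h r) − r·h(i+r)`,
`(x_s(k)·h)(r) = ρx s k (h r)`, `(t^k·h)(r) = h(t^r t^k) = h(r+k)`, and the
theorem asserts that `M̂` is stable under them, that on `M̂` they satisfy the
`𝔏̃`-module relations with `A` acting associatively and unitally, that the
stated formulas for the action on the spanning vectors `μ(x_s(j),u)` hold,
and that evaluation at `0` intertwines the actions and maps `M̂` onto `IM`.
-/

variable {S : Type*} {M : Type*} [AddCommGroup M] [Module ℂ M]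

/-- `μ(x_s(j), u) ∈ Hom(A, M)`: the map `t^r ↦ (t^r x_s(j)) u`. -/
noncomputable def mu (ρx : S → ℤ → Module.End ℂ M) (s : S) (j : ℤ) (u : M) :
    ℤ → M :=
  fun r => ρx s (j + r) u

/-- The `A`-cover `M̂`: the span of the `μ(x_s(j), u)`. -/
noncomputable def Mhat (ρx : S → ℤ → Module.End ℂ M) : Submodule ℂ (ℤ → M) :=
  Submodule.span ℂ {h : ℤ → M | ∃ (s : S) (j : ℤ) (u : M), h = mu ρx s j u}

/-- Action of `d_i` on `Hom(A, M)`. -/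
noncomputable def Dhat (ρd : ℤ → Module.End ℂ M) (i : ℤ) :
    Module.End ℂ (ℤ → M) :=
  LinearMap.pi fun r : ℤ =>
    (ρd i).comp (LinearMap.proj r) - (r : ℂ) • LinearMap.proj (i + r)

/-- Action of `x_s(k)` on `Hom(A, M)`. -/
noncomputable def Xhat (ρx : S → ℤ → Module.End ℂ M) (s : S) (k : ℤ) :
    Module.End ℂ (ℤ → M) :=
  LinearMap.pi fun r : ℤ => (ρx s k).comp (LinearMap.proj r)

/-- Action of `t^k` on `Hom(A, M)`. -/
noncomputable def Ahat (k : ℤ) : Module.End ℂ (ℤ → M) :=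
  LinearMap.pi fun r : ℤ => LinearMap.proj (r + k)

/-- Evaluation at `t^0 = 1`, i.e. `π : μ(x,u) ↦ xu`. -/
noncomputable def pihat : (ℤ → M) →ₗ[ℂ] M := LinearMap.proj (0 : ℤ)


section Aux

variable {S : Type*} {M : Type*} [AddCommGroup M] [Module ℂ M]

lemma Dhat_apply (ρd : ℤ → Module.End ℂ M) (i : ℤ) (h : ℤ → M) (r : ℤ) :
    Dhat ρd i h r = ρd i (h r) - (r : ℂ) • h (i + r) := by simp [Dhat]

lemma Xhat_apply (ρx : S → ℤ → Module.End ℂ M) (s : S) (k : ℤ) (h : ℤ → M) (r : ℤ) :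
    Xhat ρx s k h r = ρx s k (h r) := by simp [Xhat]

lemma Ahat_apply (k : ℤ) (h : ℤ → M) (r : ℤ) : Ahat k h r = h (r + k) := by simp [Ahat]

lemma mu_apply (ρx : S → ℤ → Module.End ℂ M) (s : S) (j : ℤ) (u : M) (r : ℤ) :
    mu ρx s j u r = ρx s (j + r) u := rfl

lemma pihat_apply (h : ℤ → M) : pihat h = h 0 := rfl

end Aux

theorem Acover_module_structure (β : S → ℂ) (c : S → S → (S →₀ ℂ))
    (ρd : ℤ → Module.End ℂ M) (ρx : S → ℤ → Module.End ℂ M)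
    -- M is an 𝔏-module:
    (hdd : ∀ i j : ℤ, ⁅ρd i, ρd j⁆ = ((j : ℂ) - (i : ℂ)) • ρd (i + j))
    (hdx : ∀ (i : ℤ) (s : S) (k : ℤ),
      ⁅ρd i, ρx s k⁆ = ((k : ℂ) + (i : ℂ) * β s) • ρx s (i + k))
    (hxx : ∀ (s p : S) (j k : ℤ),
      ⁅ρx s j, ρx p k⁆ = ((c s p).sum fun q a => a • ρx q (j + k) : Module.End ℂ M))
    -- IM ≠ 0:
    (hIM : Submodule.span ℂ {m : M | ∃ (s : S) (j : ℤ) (u : M), m = ρx s j u} ≠ ⊥) :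
    -- M̂ is stable under the actions:
    (∀ h ∈ Mhat ρx, ∀ i : ℤ, Dhat ρd i h ∈ Mhat ρx) ∧
    (∀ h ∈ Mhat ρx, ∀ (s : S) (k : ℤ), Xhat ρx s k h ∈ Mhat ρx) ∧
    (∀ h ∈ Mhat ρx, ∀ k : ℤ, Ahat k h ∈ Mhat ρx) ∧
    -- the defining formulas for the action on μ(x,u) hold:
    (∀ (i : ℤ) (s : S) (j : ℤ) (u : M),
      Dhat ρd i (mu ρx s j u) =
        ((j : ℂ) + (i : ℂ) * β s) • mu ρx s (i + j) u + mu ρx s j (ρd i u)) ∧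
    (∀ (s p : S) (k j : ℤ) (u : M),
      Xhat ρx s k (mu ρx p j u) =
        ((c s p).sum fun q a => a • mu ρx q (k + j) u) + mu ρx p j (ρx s k u)) ∧
    (∀ (k : ℤ) (s : S) (j : ℤ) (u : M),
      Ahat k (mu ρx s j u) = mu ρx s (j + k) u) ∧
    -- A acts associatively and unitally, and the 𝔏̃-relations hold on M̂:
    (∀ (h : ℤ → M) (k l : ℤ), Ahat k (Ahat l h) = Ahat (k + l) h) ∧
    (∀ h : ℤ → M, Ahat 0 h = h) ∧
    (∀ h ∈ Mhat ρx, ∀ i j : ℤ,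
      ⁅Dhat ρd i, Dhat ρd j⁆ h = (((j : ℂ) - (i : ℂ)) • Dhat ρd (i + j)) h) ∧
    (∀ h ∈ Mhat ρx, ∀ (i : ℤ) (s : S) (k : ℤ),
      ⁅Dhat ρd i, Xhat ρx s k⁆ h =
        (((k : ℂ) + (i : ℂ) * β s) • Xhat ρx s (i + k)) h) ∧
    (∀ h ∈ Mhat ρx, ∀ (s p : S) (j k : ℤ),
      ⁅Xhat ρx s j, Xhat ρx p k⁆ h =
        ((c s p).sum fun q a => a • Xhat ρx q (j + k) : Module.End ℂ (ℤ → M)) h) ∧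
    (∀ h ∈ Mhat ρx, ∀ i k : ℤ,
      ⁅Dhat ρd i, Ahat k⁆ h = ((k : ℂ) • Ahat (i + k) : Module.End ℂ (ℤ → M)) h) ∧
    (∀ h ∈ Mhat ρx, ∀ (s : S) (j k : ℤ), ⁅Xhat ρx s j, Ahat k⁆ h = 0) ∧
    -- π is an 𝔏-module homomorphism onto IM:
    (∀ h ∈ Mhat ρx, ∀ i : ℤ, pihat (Dhat ρd i h) = ρd i (pihat h)) ∧
    (∀ h ∈ Mhat ρx, ∀ (s : S) (k : ℤ), pihat (Xhat ρx s k h) = ρx s k (pihat h)) ∧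
    Submodule.map (pihat (M := M)) (Mhat ρx) =
      Submodule.span ℂ {m : M | ∃ (s : S) (j : ℤ) (u : M), m = ρx s j u} := by
  
  classical
  -- pointwise commutator facts
  have hdx' : ∀ (i : ℤ) (s : S) (k : ℤ) (v : M),
      ρd i (ρx s k v) = ρx s k (ρd i v) + ((k : ℂ) + (i : ℂ) * β s) • ρx s (i + k) v := by
    intro i s k v
    have := LinearMap.congr_fun (hdx i s k) v
    simp only [Ring.lie_def, LinearMap.sub_apply, Module.End.mul_apply,
      LinearMap.smul_apply] at this
    linear_combination (norm := module) this
  have hdd' : ∀ (i j : ℤ) (v : M),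
      ρd i (ρd j v) - ρd j (ρd i v) = ((j : ℂ) - (i : ℂ)) • ρd (i + j) v := by
    intro i j v
    have := LinearMap.congr_fun (hdd i j) v
    simpa [Ring.lie_def, LinearMap.sub_apply, Module.End.mul_apply] using this
  have hxx' : ∀ (s p : S) (j k : ℤ) (v : M),
      ρx s j (ρx p k v) - ρx p k (ρx s j v)
        = (c s p).sum fun q a => a • ρx q (j + k) v := by
    intro s p j k v
    have := LinearMap.congr_fun (hxx s p j k) v
    simpa [Ring.lie_def, LinearMap.sub_apply, Module.End.mul_apply,
      LinearMap.finsupp_sum_apply] using this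
  -- defining formulas on the spanning vectors
  have hDmu : ∀ (i : ℤ) (s : S) (j : ℤ) (u : M),
      Dhat ρd i (mu ρx s j u) =
        ((j : ℂ) + (i : ℂ) * β s) • mu ρx s (i + j) u + mu ρx s j (ρd i u) := by
    intro i s j u
    funext r
    have h1 := hdx' i s (j + r) u
    push_cast at h1
    simp only [Dhat_apply, mu_apply, Pi.add_apply, Pi.smul_apply]
    have e1 : j + (i + r) = i + (j + r) := by ring
    have e2 : i + j + r = i + (j + r) := by ring
    rw [e1, e2]
    linear_combination (norm := module) h1
  have hXmu : ∀ (s p : S) (k j : ℤ) (u : M),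
      Xhat ρx s k (mu ρx p j u) =
        ((c s p).sum fun q a => a • mu ρx q (k + j) u) + mu ρx p j (ρx s k u) := by
    intro s p k j u
    funext r
    have h1 := sub_eq_iff_eq_add.mp (hxx' s p k (j + r) u)
    simp only [← add_assoc] at h1
    simp only [Xhat_apply, mu_apply, Pi.add_apply, Finsupp.sum,
      Finset.sum_apply, Pi.smul_apply]
    exact h1
  have hAmu : ∀ (k : ℤ) (s : S) (j : ℤ) (u : M),
      Ahat k (mu ρx s j u) = mu ρx s (j + k) u := by
    intro k s j u
    funext r
    simp only [Ahat_apply, mu_apply]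
    congr 1
    ring
  -- stability
  have hmem : ∀ (s : S) (j : ℤ) (u : M), mu ρx s j u ∈ Mhat ρx := fun s j u =>
    Submodule.subset_span ⟨s, j, u, rfl⟩
  have stab : ∀ (L : Module.End ℂ (ℤ → M)),
      (∀ (s : S) (j : ℤ) (u : M), L (mu ρx s j u) ∈ Mhat ρx) →
      ∀ h ∈ Mhat ρx, L h ∈ Mhat ρx := by
    intro L hL h hh
    have : Mhat ρx ≤ Submodule.comap L (Mhat ρx) := by
      apply Submodule.span_le.2
      rintro g ⟨s, j, u, rfl⟩
      exact hL s j u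
    exact this hh
  refine ⟨?_, ?_, ?_, hDmu, hXmu, hAmu, ?_, ?_, ?_, ?_, ?_, ?_, ?_, ?_, ?_, ?_⟩
  · intro h hh i
    refine stab _ ?_ h hh
    intro s j u
    rw [hDmu]
    exact add_mem (Submodule.smul_mem _ _ (hmem s _ u)) (hmem s j _)
  · intro h hh s k
    refine stab _ ?_ h hh
    intro p j u
    rw [hXmu]
    refine add_mem (Submodule.sum_mem _ ?_) (hmem p j _)
    intro q _
    exact Submodule.smul_mem _ _ (hmem q _ u)
  · intro h hh k
    refine stab _ ?_ h hh
    intro s j u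
    rw [hAmu]
    exact hmem s _ u
  · intro h k l
    funext r
    simp only [Ahat_apply]
    congr 1
    ring
  · intro h
    funext r
    simp [Ahat_apply]
  · intro h _ i j
    funext r
    simp only [Ring.lie_def, LinearMap.sub_apply, Module.End.mul_apply,
      LinearMap.smul_apply, Pi.sub_apply, Pi.smul_apply, Dhat_apply,
      map_sub, map_smul]
    have h1 := hdd' i j (h r)
    have e1 : j + (i + r) = i + (j + r) := by ring
    have e2 : i + j + r = i + (j + r) := by ring
    rw [e1, e2]
    push_cast
    linear_combination (norm := module) h1
  · intro h _ i s k
    funext r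
    simp only [Ring.lie_def, LinearMap.sub_apply, Module.End.mul_apply,
      LinearMap.smul_apply, Pi.sub_apply, Pi.smul_apply, Dhat_apply,
      Xhat_apply, map_sub, map_smul]
    have h1 := hdx' i s k (h r)
    linear_combination (norm := module) h1
  · intro h _ s p j k
    funext r
    simp only [Ring.lie_def, LinearMap.sub_apply, Module.End.mul_apply,
      Finsupp.sum, LinearMap.sum_apply, Finset.sum_apply,
      LinearMap.smul_apply, Pi.sub_apply, Pi.smul_apply, Xhat_apply]
    exact hxx' s p j k (h r)
  · intro h _ i k
    funext r
    simp only [Ring.lie_def, LinearMap.sub_apply, Module.End.mul_apply,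
      LinearMap.smul_apply, Pi.sub_apply, Pi.smul_apply, Dhat_apply,
      Ahat_apply, map_sub, map_smul]
    have e1 : i + (r + k) = r + (i + k) := by ring
    have e2 : i + r + k = r + (i + k) := by ring
    rw [e1, e2]
    push_cast
    module
  · intro h _ s j k
    funext r
    simp [Ring.lie_def, Xhat_apply, Ahat_apply]
  · intro h _ i
    simp [pihat_apply, Dhat_apply]
  · intro h _ s k
    simp [pihat_apply, Xhat_apply]
  · rw [Mhat, Submodule.map_span]
    congr 1
    ext m
    constructor
    · rintro ⟨g, ⟨s, j, u, rfl⟩, rfl⟩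
      exact ⟨s, j, u, by simp [pihat_apply, mu_apply]⟩
    · rintro ⟨s, j, u, rfl⟩
      exact ⟨mu ρx s j u, ⟨s, j, u, rfl⟩, by simp [pihat_apply, mu_apply]⟩
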